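/- Let σ be the logistic sigmoid and z, z' ∈ ℝ with |z - z'| ≤ ε. Then for any p ∈ [0,1], the quantity -p·ln(σ(z')/σ(z)) - (1-p)·ln((1-σ(z'))/(1-σ(z))) is at most ε. -/

import Mathlib

noncomputable def sigmoid (z : ℝ) : ℝ := 1 / (1 + Real.exp (-z))

lemma softplus_lip (a b : ℝ) :
    Real.log (1 + Real.exp (-a)) - Real.log (1 + Real.exp (-b)) ≤ max (b - a) 0 := by
  have hpa : (0:ℝ) < 1 + Real.exp (-a) := by positivity
  have hpb : (0:ℝ) < 1 + Real.exp (-b) := by positivity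
  have key : 1 + Real.exp (-a) ≤ Real.exp (max (b - a) 0) * (1 + Real.exp (-b)) := by
    have h1 : (1:ℝ) ≤ Real.exp (max (b - a) 0) := by
      rw [show (1:ℝ) = Real.exp 0 from (Real.exp_zero).symm]
      exact Real.exp_le_exp.mpr (le_max_right _ _)
    have h2 : Real.exp (-a) ≤ Real.exp (max (b - a) 0) * Real.exp (-b) := by
      rw [← Real.exp_add]
      apply Real.exp_le_exp.mpr
      have : b - a ≤ max (b - a) 0 := le_max_left _ _
      linarith
    nlinarith [Real.exp_pos (-b), Real.exp_pos (max (b - a) 0)]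
  have := Real.log_le_log hpa key
  rwa [Real.log_mul (by positivity) (ne_of_gt hpb), Real.log_exp, ← sub_le_iff_le_add] at this

theorem per_sample_distillation_bound (z z' ε : ℝ) (hz : |z - z'| ≤ ε)
    (p : ℝ) (hp : p ∈ Set.Icc (0:ℝ) 1) :
    -p * Real.log (sigmoid z' / sigmoid z)
      - (1 - p) * Real.log ((1 - sigmoid z') / (1 - sigmoid z)) ≤ ε := by
  obtain ⟨hp0, hp1⟩ := hp
  have hpa : (0:ℝ) < 1 + Real.exp (-z) := by positivity
  have hpb : (0:ℝ) < 1 + Real.exp (-z') := by positivity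
  set f : ℝ → ℝ := fun a => Real.log (1 + Real.exp (-a)) with hf
  have hσ : ∀ a, sigmoid a = 1 / (1 + Real.exp (-a)) := fun a => rfl
  have hlogσ : ∀ a, Real.log (sigmoid a) = -f a := by
    intro a
    rw [hσ, one_div, Real.log_inv]
  have h1σ : ∀ a, 1 - sigmoid a = Real.exp (-a) / (1 + Real.exp (-a)) := by
    intro a
    have : (0:ℝ) < 1 + Real.exp (-a) := by positivity
    rw [hσ]
    field_simp
    ring
  have hlog1σ : ∀ a, Real.log (1 - sigmoid a) = -a - f a := by
    intro a
    have h : (0:ℝ) < 1 + Real.exp (-a) := by positivity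
    rw [h1σ, Real.log_div (Real.exp_ne_zero _) (ne_of_gt h), Real.log_exp]
  have hσpos : ∀ a, 0 < sigmoid a := by
    intro a; rw [hσ]; positivity
  have h1σpos : ∀ a, 0 < 1 - sigmoid a := by
    intro a
    rw [h1σ]
    positivity
  rw [Real.log_div (ne_of_gt (hσpos z')) (ne_of_gt (hσpos z)),
    Real.log_div (ne_of_gt (h1σpos z')) (ne_of_gt (h1σpos z)),
    hlogσ, hlogσ, hlog1σ, hlog1σ]
  have L1 : f z' - f z ≤ max (z - z') 0 := softplus_lip z' z
  have L2 : f z - f z' ≤ max (z' - z) 0 := softplus_lip z z'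
  have M1 : max (z - z') 0 ≤ |z - z'| := max_le (le_abs_self _) (abs_nonneg _)
  have M2 : max (z' - z) 0 ≤ |z - z'| := by
    rw [abs_sub_comm]
    exact max_le (le_abs_self _) (abs_nonneg _)
  have hε0 : 0 ≤ ε := le_trans (abs_nonneg _) hz
  have A : f z' - f z ≤ ε := (L1.trans M1).trans hz
  have hm : z' - z + max (z - z') 0 ≤ |z - z'| := by
    rcases le_total z z' with h | h
    · rw [max_eq_right (by linarith), abs_sub_comm]
      simpa using le_abs_self (z' - z)
    · rw [max_eq_left (by linarith)]
      have := abs_nonneg (z - z'); linarith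
  have B : z' - z + (f z' - f z) ≤ ε := by
    have := hm.trans hz
    linarith
  have hA := mul_le_mul_of_nonneg_left A hp0
  have hB := mul_le_mul_of_nonneg_left B (by linarith : (0:ℝ) ≤ 1 - p)
  nlinarith [hA, hB]
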